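/- Let A be a finite type, let F = FreeGroup A, and let H ≤ G be subgroups of F with H finitely generated, H nontrivial, and H of finite index in G. If a word t : List (A × Bool) is a prefix of the reduced word FreeGroup.toWord h for every h ∈ H with h ≠ 1, then t is a prefix of FreeGroup.toWord g for every g ∈ G with g ≠ 1. (Common prefixes of the nontrivial elements are preserved under finite-index extension.) -/

import Mathlib

set_option linter.unusedSectionVars false

open List

namespace CPP

variable {A : Type*} [DecidableEq A]

/-- The no-cancellation relation on letters. -/
abbrev R : (A × Bool) → (A × Bool) → Prop := fun p q => ¬ (p.1 = q.1 ∧ p.2 = !q.2)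

lemma reduce_eq_self_of_chain' : ∀ {w : List (A × Bool)}, w.Chain' R → FreeGroup.reduce w = w
  | [], _ => rfl
  | x :: w, h => by
    have hw : FreeGroup.reduce w = w := reduce_eq_self_of_chain' h.tail
    rw [FreeGroup.reduce.cons, hw]
    cases w with
    | nil => rfl
    | cons hd tl =>
      have hx : ¬ (x.1 = hd.1 ∧ x.2 = !hd.2) := (List.isChain_cons_cons.mp h).1
      simp [hx]

lemma chain'_of_reduce_eq_self : ∀ {w : List (A × Bool)}, FreeGroup.reduce w = w → w.Chain' R
  | [], _ => List.isChain_nil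
  | [x], _ => List.isChain_singleton x
  | x :: hd :: tl, h => by
    rw [FreeGroup.reduce.cons] at h
    rcases hr : FreeGroup.reduce (hd :: tl) with _ | ⟨hd2, tl2⟩
    · rw [hr] at h; simp at h
    · rw [hr] at h
      dsimp only at h
      by_cases hc : x.1 = hd2.1 ∧ x.2 = !hd2.2
      · rw [if_pos hc] at h
        have hlen : (FreeGroup.reduce (hd :: tl)).length ≤ (hd :: tl).length :=
          FreeGroup.reduce.red.length_le
        rw [hr] at hlen
        have : tl2.length = tl.length + 2 := by rw [h]; simp
        simp [this] at hlen
      · rw [if_neg hc] at h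
        obtain ⟨-, h2, h3⟩ : x = x ∧ hd2 = hd ∧ tl2 = tl := by
          simpa using h
        subst h2; subst h3
        exact List.isChain_cons_cons.mpr ⟨hc, chain'_of_reduce_eq_self hr⟩

lemma toWord_chain' (x : FreeGroup A) : x.toWord.Chain' R :=
  chain'_of_reduce_eq_self (FreeGroup.reduce_toWord x)

lemma invRev_append (a b : List (A × Bool)) :
    FreeGroup.invRev (a ++ b) = FreeGroup.invRev b ++ FreeGroup.invRev a := by
  simp [FreeGroup.invRev]

lemma invRev_cons (y : A × Bool) (a : List (A × Bool)) :
    FreeGroup.invRev (y :: a) = FreeGroup.invRev a ++ [(y.1, !y.2)] := by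
  simp [FreeGroup.invRev]

/-- Cyclic decomposition of a reduced word. -/
lemma decomp : ∀ w : List (A × Bool), w.Chain' R → w ≠ [] →
    ∃ u c : List (A × Bool), c ≠ [] ∧ w = u ++ c ++ FreeGroup.invRev u ∧
      ∀ x ∈ c.getLast?, ∀ y ∈ c.head?, R x y := by
  suffices h : ∀ n (w : List (A × Bool)), w.length ≤ n → w.Chain' R → w ≠ [] →
      ∃ u c : List (A × Bool), c ≠ [] ∧ w = u ++ c ++ FreeGroup.invRev u ∧
        ∀ x ∈ c.getLast?, ∀ y ∈ c.head?, R x y from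
    fun w => h w.length w le_rfl
  intro n
  induction n with
  | zero =>
    intro w hw _ hne
    exact absurd (List.length_eq_zero_iff.mp (Nat.le_zero.mp hw)) hne
  | succ n ih =>
    intro w hlen hch hne
    by_cases hcyc : ∀ x ∈ w.getLast?, ∀ y ∈ w.head?, R x y
    · exact ⟨[], w, hne, by simp [FreeGroup.invRev], hcyc⟩
    · push_neg at hcyc
      obtain ⟨x', hx', y, hy, hxy⟩ := hcyc
      -- w = y :: rest with getLast x'
      obtain ⟨rest, rfl⟩ : ∃ rest, w = y :: rest := by
        cases w with
        | nil => exact absurd rfl hne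
        | cons a l =>
          have : a = y := by simpa using hy
          exact ⟨l, by rw [this]⟩
      have hrest : rest ≠ [] := by
        rintro rfl
        have hx : y = x' := by simpa using hx'
        subst hx
        simp only [R, not_not] at hxy
        simp at hxy
      obtain ⟨m, rfl⟩ : ∃ m, rest = m ++ [x'] := by
        have h0 : (y :: rest).getLast? = rest.getLast? := by
          rw [show y :: rest = [y] ++ rest from rfl, List.getLast?_append_of_ne_nil _ hrest]
        rw [h0, List.getLast?_eq_some_getLast hrest] at hx'
        have h1 : rest.getLast hrest = x' := by simpa using hx'
        exact ⟨rest.dropLast, by rw [← h1, List.dropLast_append_getLast]⟩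
      have hxy' : x' = (y.1, !y.2) := Prod.ext hxy.1 hxy.2
      have hm : m ≠ [] := by
        rintro rfl
        have h2 := List.isChain_cons_cons.mp hch |>.1
        rw [hxy'] at h2
        simp [R] at h2
      have hmch : m.Chain' R := by
        exact hch.infix ⟨[y], [x'], by simp⟩
      have hmlen : m.length ≤ n := by
        simp only [List.length_cons, List.length_append, List.length_singleton] at hlen
        omega
      obtain ⟨u', c, hc, hdec, hcyc'⟩ := ih m hmlen hmch hm
      refine ⟨y :: u', c, hc, ?_, hcyc'⟩
      rw [invRev_cons, hdec, ← hxy']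
      simp

/-- `n`-fold concatenation of a word. -/
def J (n : ℕ) (c : List (A × Bool)) : List (A × Bool) := (List.replicate n c).flatten

lemma J_succ (n : ℕ) (c : List (A × Bool)) : J (n+1) c = c ++ J n c := by
  simp [J, List.replicate_succ]

lemma J_succ' (n : ℕ) (c : List (A × Bool)) : J (n+1) c = J n c ++ c := by
  simp [J, List.replicate_succ']

lemma J_ne_nil {n : ℕ} (hn : 0 < n) {c : List (A × Bool)} (hc : c ≠ []) : J n c ≠ [] := by
  obtain ⟨m, rfl⟩ := Nat.exists_eq_add_of_lt hn
  rw [zero_add, J_succ]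
  simp [hc]

lemma mk_J (n : ℕ) (c : List (A × Bool)) : FreeGroup.mk (J n c) = (FreeGroup.mk c) ^ n := by
  induction n with
  | zero => simp [J]; rfl
  | succ n ih => rw [J_succ, pow_succ', ← ih, ← FreeGroup.mul_mk]

lemma invRev_J (n : ℕ) (c : List (A × Bool)) :
    FreeGroup.invRev (J n c) = J n (FreeGroup.invRev c) := by
  induction n with
  | zero => simp [J, FreeGroup.invRev]
  | succ n ih => rw [J_succ, invRev_append, ih, J_succ']

lemma head?_J {n : ℕ} (hn : 0 < n) {c : List (A × Bool)} (hc : c ≠ []) :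
    (J n c).head? = c.head? := by
  obtain ⟨m, rfl⟩ := Nat.exists_eq_add_of_lt hn
  rw [zero_add, J_succ, List.head?_append_of_ne_nil _ hc]

lemma getLast?_J {n : ℕ} (hn : 0 < n) {c : List (A × Bool)} (hc : c ≠ []) :
    (J n c).getLast? = c.getLast? := by
  obtain ⟨m, rfl⟩ := Nat.exists_eq_add_of_lt hn
  rw [zero_add, J_succ', List.getLast?_append_of_ne_nil _ hc]

lemma chain'_J (n : ℕ) {c : List (A × Bool)} (hc : c ≠ []) (hch : c.Chain' R)
    (hcyc : ∀ x ∈ c.getLast?, ∀ y ∈ c.head?, R x y) : (J n c).Chain' R := by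
  induction n with
  | zero => exact List.isChain_nil
  | succ n ih =>
    rw [J_succ, List.Chain', List.isChain_append]
    refine ⟨hch, ih, ?_⟩
    intro x hx y hy
    rcases Nat.eq_zero_or_pos n with rfl | hn
    · simp [J] at hy
    · rw [head?_J hn hc] at hy
      exact hcyc x hx y hy

lemma conj_pow_eq {G : Type*} [Group G] (a b : G) (n : ℕ) :
    (a * b * a⁻¹) ^ n = a * b ^ n * a⁻¹ := by
  induction n with
  | zero => simp
  | succ n ih => rw [pow_succ, pow_succ, ih]; group

lemma toWord_pow (x : FreeGroup A) (hx : x ≠ 1) :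
    ∃ u c : List (A × Bool), c ≠ [] ∧
      x.toWord = u ++ c ++ FreeGroup.invRev u ∧
      (∀ xg ∈ c.getLast?, ∀ yg ∈ c.head?, R xg yg) ∧
      ∀ n : ℕ, 0 < n → (x ^ n).toWord = u ++ J n c ++ FreeGroup.invRev u := by
  obtain ⟨u, c, hc, hdec, hcyc⟩ :=
    decomp x.toWord (toWord_chain' x) (fun h => hx (FreeGroup.toWord_eq_nil_iff.mp h))
  have hch : ((u ++ c) ++ FreeGroup.invRev u).Chain' R := hdec ▸ toWord_chain' x
  rw [List.append_assoc, List.Chain', List.isChain_append] at hch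
  obtain ⟨hu, hch2, hj1⟩ := hch
  rw [List.isChain_append] at hch2
  obtain ⟨hcch, hiu, hj2⟩ := hch2
  refine ⟨u, c, hc, hdec, hcyc, ?_⟩
  intro n hn
  have hxeq : x = FreeGroup.mk u * FreeGroup.mk c * (FreeGroup.mk u)⁻¹ := by
    rw [FreeGroup.inv_mk, FreeGroup.mul_mk, FreeGroup.mul_mk, ← hdec, FreeGroup.mk_toWord]
  have hpow : x ^ n = FreeGroup.mk (u ++ J n c ++ FreeGroup.invRev u) := by
    rw [hxeq, conj_pow_eq, ← mk_J, FreeGroup.inv_mk, FreeGroup.mul_mk, FreeGroup.mul_mk]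
  rw [hpow, FreeGroup.toWord_mk]
  apply reduce_eq_self_of_chain'
  rw [List.append_assoc, List.Chain', List.isChain_append]
  refine ⟨hu, ?_, ?_⟩
  · rw [List.isChain_append]
    refine ⟨chain'_J n hc hcch hcyc, hiu, ?_⟩
    intro xg hx' yg hy'
    rw [getLast?_J hn hc] at hx'
    exact hj2 xg hx' yg hy'
  · intro xg hx' yg hy'
    rw [List.head?_append_of_ne_nil _ (J_ne_nil hn hc), head?_J hn hc] at hy'
    apply hj1 xg hx' yg
    rw [List.head?_append_of_ne_nil _ hc]
    exact hy'

lemma prefix_of_two {u l1 l2 t : List (A × Bool)} (h1 : t <+: u ++ l1) (h2 : t <+: u ++ l2)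
    (hne : ∀ p ∈ l1.head?, ∀ q ∈ l2.head?, p ≠ q) : t <+: u := by
  rcases le_or_gt t.length u.length with hle | hlt
  · exact List.prefix_of_prefix_length_le h1 (u.prefix_append l1) hle
  · exfalso
    have hu : u <+: t := List.prefix_of_prefix_length_le (u.prefix_append l1) h1 hlt.le
    obtain ⟨r, rfl⟩ := hu
    have hr : r ≠ [] := by rintro rfl; simp at hlt
    have p1 : r <+: l1 := (List.prefix_append_right_inj u).mp h1
    have p2 : r <+: l2 := (List.prefix_append_right_inj u).mp h2
    obtain ⟨a, l, rfl⟩ := List.exists_cons_of_ne_nil hr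
    obtain ⟨s1, hs1⟩ := p1
    obtain ⟨s2, hs2⟩ := p2
    have e1 : l1.head? = some a := by rw [← hs1]; rfl
    have e2 : l2.head? = some a := by rw [← hs2]; rfl
    exact hne a e1 a e2 rfl

end CPP

theorem common_prefix_preserved (A : Type*) [Finite A] [DecidableEq A]
    (H G : Subgroup (FreeGroup A)) (hFG : H.FG) (hne : H ≠ ⊥) (hHG : H ≤ G)
    (hfi : (H.subgroupOf G).index ≠ 0) (t : List (A × Bool))
    (ht : ∀ h ∈ H, h ≠ 1 → t <+: FreeGroup.toWord h) :
    ∀ g ∈ G, g ≠ 1 → t <+: FreeGroup.toWord g := by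
  intro g hg hg1
  obtain ⟨u, c, hc, hdec, hcyc, hpow⟩ := CPP.toWord_pow g hg1
  obtain ⟨n, hn, -, hmem⟩ := Subgroup.exists_pow_mem_of_relIndex_ne_zero hfi hg
  have hgnH : g ^ n ∈ H := hmem.1
  have hw1 : (g ^ n).toWord = u ++ CPP.J n c ++ FreeGroup.invRev u := hpow n hn
  have hgn1 : g ^ n ≠ 1 := by
    intro h
    have := hw1
    rw [h] at this
    have h0 : ([] : List (A × Bool)) = u ++ CPP.J n c ++ FreeGroup.invRev u := by
      rw [← this]; simp [FreeGroup.toWord_one]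
    exact (CPP.J_ne_nil hn hc) (by simpa using (List.append_eq_nil_iff.mp
      (List.append_eq_nil_iff.mp h0.symm).1).2)
  have h1 := ht (g ^ n) hgnH hgn1
  have h2 := ht ((g ^ n)⁻¹) (inv_mem hgnH) (inv_ne_one.mpr hgn1)
  rw [hw1, List.append_assoc] at h1
  have hw2 : ((g ^ n)⁻¹).toWord = u ++ (CPP.J n (FreeGroup.invRev c) ++ FreeGroup.invRev u) := by
    rw [FreeGroup.toWord_inv, hw1, CPP.invRev_append, CPP.invRev_append,
      FreeGroup.invRev_invRev, CPP.invRev_J]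
  rw [hw2] at h2
  -- heads of the two middle parts differ
  obtain ⟨p, hp⟩ := List.exists_cons_of_ne_nil hc
  have key : t <+: u := by
    refine CPP.prefix_of_two h1 h2 ?_
    intro a ha b hb
    have hcne : FreeGroup.invRev c ≠ [] := by simp [FreeGroup.invRev, hc]
    rw [List.head?_append_of_ne_nil _ (CPP.J_ne_nil hn hc), CPP.head?_J hn hc] at ha
    rw [List.head?_append_of_ne_nil _ (CPP.J_ne_nil hn hcne), CPP.head?_J hn hcne] at hb
    -- ha : a ∈ c.head?, hb : b ∈ (invRev c).head?
    have hbe : (FreeGroup.invRev c).head? = c.getLast?.map (fun g => (g.1, !g.2)) := by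
      rw [FreeGroup.invRev, List.head?_reverse, List.getLast?_map]
    rw [hbe] at hb
    obtain ⟨q, hq, rfl⟩ := Option.map_eq_some_iff.mp (Option.mem_def.mp hb)
    have := hcyc q hq a ha
    rintro rfl
    exact this ⟨rfl, by simp⟩
  refine key.trans ?_
  rw [hdec, List.append_assoc]
  exact u.prefix_append _
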